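/- arXiv:1103.1130 — 2 statements merged into one kernel-verified Lean document; each statement's English description precedes it below -/
import Mathlib

section
/- Let A, B be N×N complex matrices with A skew-Hermitian, and let u: ℝ → ℝ be locally integrable. If x solves ẋ(t) = (A + u(t)B) x(t) with ‖x(0)‖ = 1, then for every eigenvector φ of A with ‖φ‖ = 1 and all s ≤ t, | |⟨φ, x(t)⟩| − |⟨φ, x(s)⟩| | ≤ ‖B* φ‖ ∫_s^t |u(τ)| dτ. -/
open MeasureTheory Matrix
open scoped InnerProductSpace
open scoped ComplexConjugate

lemma my_li_ii {q : ℝ → ℂ} (hq : LocallyIntegrable q volume) (a b : ℝ) :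
    IntervalIntegrable q volume a b :=
  (hq.integrableOn_isCompact isCompact_uIcc).intervalIntegrable

lemma my_cont_mul_ii {p q : ℝ → ℂ} (hp : Continuous p)
    (hq : LocallyIntegrable q volume) (a b : ℝ) :
    IntervalIntegrable (fun τ => p τ * q τ) volume a b :=
  (IntegrableOn.continuousOn_mul hp.continuousOn
    (hq.integrableOn_isCompact isCompact_uIcc) isCompact_uIcc).intervalIntegrable

lemma my_mul_cont_ii {p q : ℝ → ℂ} (hp : LocallyIntegrable p volume)
    (hq : Continuous q) (a b : ℝ) :
    IntervalIntegrable (fun τ => p τ * q τ) volume a b :=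
  (IntegrableOn.mul_continuousOn
    (hp.integrableOn_isCompact isCompact_uIcc) hq.continuousOn isCompact_uIcc).intervalIntegrable

lemma my_cont_of_prim {f f' : ℝ → ℂ} (hf' : LocallyIntegrable f' volume)
    (hf : ∀ s t : ℝ, f t = f s + ∫ τ in s..t, f' τ) : Continuous f := by
  have : f = fun t => f 0 + ∫ τ in (0:ℝ)..t, f' τ := funext fun t => hf 0 t
  rw [this]
  exact continuous_const.add (intervalIntegral.continuous_primitive (my_li_ii hf') 0)

lemma my_prim_mul {f g f' g' : ℝ → ℂ}
    (hf' : LocallyIntegrable f' volume) (hg' : LocallyIntegrable g' volume)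
    (hf : ∀ s t : ℝ, f t = f s + ∫ τ in s..t, f' τ)
    (hg : ∀ s t : ℝ, g t = g s + ∫ τ in s..t, g' τ)
    {a b : ℝ} (hab : a ≤ b) :
    f b * g b = f a * g a + ∫ τ in a..b, (f' τ * g τ + f τ * g' τ) := by
  have hfc : Continuous f := my_cont_of_prim hf' hf
  have hgc : Continuous g := my_cont_of_prim hg' hg
  set μ := volume.restrict (Set.Ioc a b) with hμ
  have hf'm : IntegrableOn f' (Set.Ioc a b) volume :=
    (hf'.integrableOn_isCompact isCompact_Icc).mono_set Set.Ioc_subset_Icc_self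
  have hg'm : IntegrableOn g' (Set.Ioc a b) volume :=
    (hg'.integrableOn_isCompact isCompact_Icc).mono_set Set.Ioc_subset_Icc_self
  set K : ℝ × ℝ → ℂ := fun p => f' p.1 * g' p.2 with hK
  have hKint : Integrable K (μ.prod μ) := Integrable.mul_prod hf'm hg'm
  set S : Set (ℝ × ℝ) := {p : ℝ × ℝ | p.2 < p.1} with hS
  have hSm : MeasurableSet S := measurableSet_lt measurable_snd measurable_fst
  have hK1 : Integrable (S.indicator K) (μ.prod μ) := hKint.indicator hSm
  have hK2 : Integrable (Sᶜ.indicator K) (μ.prod μ) := hKint.indicator hSm.compl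
  -- interval integral of f' over a..c equals f c - f a
  have hfint : ∀ c d : ℝ, (∫ τ in c..d, f' τ) = f d - f c := by
    intro c d; rw [hf c d]; ring
  have hgint : ∀ c d : ℝ, (∫ τ in c..d, g' τ) = g d - g c := by
    intro c d; rw [hg c d]; ring
  -- T1
  have hT1 : (∫ p, S.indicator K p ∂(μ.prod μ)) = ∫ σ in Set.Ioc a b, f' σ * (g σ - g a) := by
    rw [MeasureTheory.integral_prod _ hK1]
    apply setIntegral_congr_fun measurableSet_Ioc
    intro σ hσ
    have h1 : ∀ τ : ℝ, S.indicator K (σ, τ) = (Set.Iio σ).indicator (fun τ => f' σ * g' τ) τ := by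
      intro τ
      by_cases h : τ < σ
      · rw [Set.indicator_of_mem (by exact h) , Set.indicator_of_mem (by exact h)]
      · rw [Set.indicator_of_notMem (by exact h), Set.indicator_of_notMem (by exact h)]
    simp only [h1]
    rw [MeasureTheory.integral_indicator measurableSet_Iio, Measure.restrict_restrict measurableSet_Iio]
    have h2 : Set.Iio σ ∩ Set.Ioc a b = Set.Ioo a σ := by
      ext τ; simp only [Set.mem_inter_iff, Set.mem_Iio, Set.mem_Ioc, Set.mem_Ioo]
      constructor
      · rintro ⟨h3, h4, h5⟩; exact ⟨h4, h3⟩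
      · rintro ⟨h3, h4⟩; exact ⟨h4, h3, le_trans h4.le hσ.2⟩
    rw [h2, MeasureTheory.integral_const_mul, ← MeasureTheory.integral_Ioc_eq_integral_Ioo,
      ← intervalIntegral.integral_of_le hσ.1.le, hgint a σ]
  -- T2
  have hT2 : (∫ p, Sᶜ.indicator K p ∂(μ.prod μ)) = ∫ τ in Set.Ioc a b, (f τ - f a) * g' τ := by
    rw [MeasureTheory.integral_prod_symm _ hK2]
    apply setIntegral_congr_fun measurableSet_Ioc
    intro τ hτ
    have h1 : ∀ σ : ℝ, Sᶜ.indicator K (σ, τ) = (Set.Iic τ).indicator (fun σ => f' σ * g' τ) σ := by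
      intro σ
      have hmem : (σ, τ) ∈ Sᶜ ↔ σ ≤ τ := by simp [hS, not_lt]
      by_cases h : σ ≤ τ
      · rw [Set.indicator_of_mem (hmem.mpr h), Set.indicator_of_mem (by exact h)]
      · rw [Set.indicator_of_notMem (fun hc => h (hmem.mp hc)), Set.indicator_of_notMem (by exact h)]
    simp only [h1]
    rw [MeasureTheory.integral_indicator measurableSet_Iic, Measure.restrict_restrict measurableSet_Iic]
    have h2 : Set.Iic τ ∩ Set.Ioc a b = Set.Ioc a τ := by
      ext σ; simp only [Set.mem_inter_iff, Set.mem_Iic, Set.mem_Ioc]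
      constructor
      · rintro ⟨h3, h4, h5⟩; exact ⟨h4, h3⟩
      · rintro ⟨h3, h4⟩; exact ⟨h4, h3, le_trans h4 hτ.2⟩
    rw [h2, MeasureTheory.integral_mul_const, ← intervalIntegral.integral_of_le hτ.1.le,
      hfint a τ]
  -- sum
  have hsum : (∫ σ in Set.Ioc a b, f' σ * (g σ - g a)) + (∫ τ in Set.Ioc a b, (f τ - f a) * g' τ)
      = (f b - f a) * (g b - g a) := by
    rw [← hT1, ← hT2, ← MeasureTheory.integral_add hK1 hK2]
    have : ∀ p, S.indicator K p + Sᶜ.indicator K p = K p := by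
      intro p
      by_cases h : p ∈ S
      · rw [Set.indicator_of_mem h, Set.indicator_of_notMem (by simpa using h)]; ring
      · rw [Set.indicator_of_notMem h, Set.indicator_of_mem (by simpa using h)]; ring
    simp only [this]
    rw [hK, MeasureTheory.integral_prod_mul]
    have e1 : (∫ σ, f' σ ∂μ) = f b - f a := by
      rw [hμ, ← intervalIntegral.integral_of_le hab, hfint a b]
    have e2 : (∫ σ, g' σ ∂μ) = g b - g a := by
      rw [hμ, ← intervalIntegral.integral_of_le hab, hgint a b]
    rw [e1, e2]
  -- integrabilities on Ioc
  have hInt1 : IntegrableOn (fun τ => f' τ * g τ) (Set.Ioc a b) volume :=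
    (IntegrableOn.mul_continuousOn (hf'.integrableOn_isCompact isCompact_Icc)
      hgc.continuousOn isCompact_Icc).mono_set Set.Ioc_subset_Icc_self
  have hInt2 : IntegrableOn (fun τ => f τ * g' τ) (Set.Ioc a b) volume :=
    (IntegrableOn.continuousOn_mul hfc.continuousOn
      (hg'.integrableOn_isCompact isCompact_Icc) isCompact_Icc).mono_set Set.Ioc_subset_Icc_self
  have hsplit1 : (∫ σ in Set.Ioc a b, f' σ * (g σ - g a))
      = (∫ σ in Set.Ioc a b, f' σ * g σ) - (f b - f a) * g a := by
    have : ∀ σ, f' σ * (g σ - g a) = f' σ * g σ - g a * f' σ := by intro σ; ring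
    simp only [this]
    rw [MeasureTheory.integral_sub hInt1 (hf'm.const_mul (g a)), MeasureTheory.integral_const_mul]
    have e1 : (∫ σ in Set.Ioc a b, f' σ) = f b - f a := by
      rw [← intervalIntegral.integral_of_le hab, hfint a b]
    rw [e1]; ring
  have hsplit2 : (∫ τ in Set.Ioc a b, (f τ - f a) * g' τ)
      = (∫ τ in Set.Ioc a b, f τ * g' τ) - f a * (g b - g a) := by
    have : ∀ τ, (f τ - f a) * g' τ = f τ * g' τ - f a * g' τ := by intro τ; ring
    simp only [this]
    rw [MeasureTheory.integral_sub hInt2 (hg'm.const_mul (f a)), MeasureTheory.integral_const_mul]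
    have e1 : (∫ σ in Set.Ioc a b, g' σ) = g b - g a := by
      rw [← intervalIntegral.integral_of_le hab, hgint a b]
    rw [e1]
  rw [intervalIntegral.integral_of_le hab,
    MeasureTheory.integral_add hInt1 hInt2]
  have h9 := hsum
  rw [hsplit1, hsplit2] at h9
  have hkey : (∫ σ in Set.Ioc a b, f' σ * g σ) + (∫ τ in Set.Ioc a b, f τ * g' τ)
      = f b * g b - f a * g a := by linear_combination h9
  rw [hkey]; ring

-- primitive over all intervals from base-point form
lemma my_prim_shift {f w : ℝ → ℂ} (hw : ∀ a b : ℝ, IntervalIntegrable w volume a b)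
    (h0 : ∀ t : ℝ, f t = f 0 + ∫ τ in (0:ℝ)..t, w τ) :
    ∀ s t : ℝ, f t = f s + ∫ τ in s..t, w τ := by
  intro s t
  have := intervalIntegral.integral_add_adjacent_intervals (hw 0 s) (hw s t)
  rw [h0 t, h0 s]
  rw [← this]; ring

lemma my_conj_ii {f : ℝ → ℂ} {a b : ℝ} (h : IntervalIntegrable f volume a b) :
    IntervalIntegrable (fun t => conj (f t)) volume a b := by
  constructor
  · exact (Complex.conjCLE.toContinuousLinearMap).integrable_comp h.1
  · exact (Complex.conjCLE.toContinuousLinearMap).integrable_comp h.2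

lemma my_conj_li {f : ℝ → ℂ} (h : LocallyIntegrable f volume) :
    LocallyIntegrable (fun t => conj (f t)) volume := by
  intro x
  obtain ⟨U, hU, hint⟩ := h x
  exact ⟨U, hU, (Complex.conjCLE.toContinuousLinearMap).integrable_comp hint⟩

lemma my_intervalIntegral_conj {f : ℝ → ℂ} {a b : ℝ} :
    (∫ τ in a..b, conj (f τ)) = conj (∫ τ in a..b, f τ) := by
  simp only [intervalIntegral, integral_conj, map_sub]

lemma my_exp_prim (c : ℂ) : ∀ s t : ℝ,
    Complex.exp (c * t) = Complex.exp (c * s) + ∫ τ in s..t, c * Complex.exp (c * τ) := by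
  intro s t
  have hd : ∀ τ : ℝ, HasDerivAt (fun r : ℝ => Complex.exp (c * r)) (c * Complex.exp (c * τ)) τ := by
    intro τ
    have h1 : HasDerivAt (fun r : ℝ => c * (r : ℂ)) c τ := by
      simpa using (Complex.ofRealCLM.hasDerivAt (x := τ)).const_mul c
    exact ((Complex.hasDerivAt_exp (c * τ)).comp τ h1).congr_deriv (mul_comm _ _)
  have hint : IntervalIntegrable (fun τ : ℝ => c * Complex.exp (c * τ)) volume s t :=
    (Continuous.intervalIntegrable (by continuity) s t)
  rw [intervalIntegral.integral_eq_sub_of_hasDerivAt (fun τ _ => hd τ) hint]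
  ring


-- generic version of li->intervalIntegrable
lemma my_li_ii' {E : Type*} [NormedAddCommGroup E] {q : ℝ → E}
    (hq : LocallyIntegrable q volume) (a b : ℝ) :
    IntervalIntegrable q volume a b :=
  (hq.integrableOn_isCompact isCompact_uIcc).intervalIntegrable

lemma my_ofReal_li {f : ℝ → ℝ} (h : LocallyIntegrable f volume) :
    LocallyIntegrable (fun t => (f t : ℂ)) volume := by
  intro x
  obtain ⟨U, hU, hint⟩ := h x
  exact ⟨U, hU, Complex.ofRealCLM.integrable_comp hint⟩



/-- For skew-Hermitian `A`, `B` and a locally integrable control `u`, along a solution of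
`ẋ = (A + u(t)B)x` with `‖x(0)‖ = 1`, for a unit eigenvector `φ` of `A`:
`| |⟨φ, x(t)⟩| − |⟨φ, x(s)⟩| | ≤ ‖B*φ‖ ∫_s^t |u|`. -/
theorem stmt_12 (N : ℕ) (A B : Matrix (Fin N) (Fin N) ℂ)
    (hA : Aᴴ = -A) (hB : Bᴴ = -B)
    (u : ℝ → ℝ) (hu : LocallyIntegrable u volume)
    (x : ℝ → EuclideanSpace ℂ (Fin N))
    (hx : ∀ i, LocallyIntegrable (fun τ => (A + (u τ : ℂ) • B).mulVec (x τ) i) volume)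
    (hode : ∀ t : ℝ, ∀ i, x t i = x 0 i + ∫ τ in (0:ℝ)..t, (A + (u τ : ℂ) • B).mulVec (x τ) i)
    (hx0 : ‖x 0‖ = 1)
    (φ : EuclideanSpace ℂ (Fin N)) (hφnorm : ‖φ‖ = 1)
    (lam : ℝ) (hφ : ∀ i, A.mulVec φ i = (Complex.I * lam) * φ i)
    (s t : ℝ) (hst : s ≤ t) :
    |‖(⟪φ, x t⟫_ℂ)‖ - ‖(⟪φ, x s⟫_ℂ)‖|
      ≤ ‖(WithLp.equiv 2 (Fin N → ℂ)).symm (Bᴴ.mulVec φ)‖ * ∫ τ in s..t, |u τ| := by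
  set v : Fin N → ℝ → ℂ := fun i τ => (A + (u τ : ℂ) • B).mulVec (x τ) i with hv
  have hxprim : ∀ i, ∀ s t : ℝ, x t i = x s i + ∫ τ in s..t, v i τ :=
    fun i => my_prim_shift (fun a b => my_li_ii (hx i) a b) (fun r => hode r i)
  have hxc : ∀ i, Continuous fun τ => x τ i := fun i => my_cont_of_prim (hx i) (hxprim i)
  -- entrywise skewness
  have hAe : ∀ i j, conj (A i j) = -A j i := by
    intro i j
    have h1 := congrFun (congrFun hA j) i
    simpa [Matrix.conjTranspose_apply] using h1
  have hBe : ∀ i j, conj (B i j) = -B j i := by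
    intro i j
    have h1 := congrFun (congrFun hB j) i
    simpa [Matrix.conjTranspose_apply] using h1
  have hMe : ∀ (τ : ℝ) (i j : Fin N),
      conj ((A + (u τ : ℂ) • B) i j) = -(A + (u τ : ℂ) • B) j i := by
    intro τ i j
    simp only [Matrix.add_apply, Matrix.smul_apply, smul_eq_mul, map_add, _root_.map_mul,
      Complex.conj_ofReal, hAe i j, hBe i j]
    ring
  -- pointwise skew cancellation
  have hskew0 : ∀ τ : ℝ, ∑ i, (conj (v i τ) * x τ i + conj (x τ i) * v i τ) = 0 := by
    intro τ
    have hv' : ∀ i, v i τ = ∑ j, (A + (u τ : ℂ) • B) i j * x τ j := by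
      intro i; simp [hv, Matrix.mulVec, dotProduct]
    have e2 : ∀ i, conj (x τ i) * v i τ = ∑ j, (A + (u τ : ℂ) • B) i j * conj (x τ i) * x τ j := by
      intro i; rw [hv' i, Finset.mul_sum]
      exact Finset.sum_congr rfl fun j _ => by ring
    have e1 : ∀ i, conj (v i τ) * x τ i
        = ∑ j, -((A + (u τ : ℂ) • B) j i * conj (x τ j) * x τ i) := by
      intro i; rw [hv' i, map_sum, Finset.sum_mul]
      refine Finset.sum_congr rfl fun j _ => ?_
      rw [_root_.map_mul, hMe τ i j]; ring
    calc ∑ i, (conj (v i τ) * x τ i + conj (x τ i) * v i τ)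
        = (∑ i, conj (v i τ) * x τ i) + ∑ i, conj (x τ i) * v i τ := Finset.sum_add_distrib
      _ = (∑ i, ∑ j, -((A + (u τ : ℂ) • B) j i * conj (x τ j) * x τ i))
            + ∑ i, ∑ j, (A + (u τ : ℂ) • B) i j * conj (x τ i) * x τ j := by
          rw [Finset.sum_congr rfl fun i _ => e1 i, Finset.sum_congr rfl fun i _ => e2 i]
      _ = 0 := by
          rw [Finset.sum_comm, ← Finset.sum_add_distrib]
          refine Finset.sum_eq_zero fun i _ => ?_
          rw [← Finset.sum_add_distrib]
          exact Finset.sum_eq_zero fun j _ => by ring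
  -- norm conservation
  have hcon : ∀ a b : ℝ, a ≤ b → ∑ i, conj (x b i) * x b i = ∑ i, conj (x a i) * x a i := by
    intro a b hab
    have hprodi : ∀ i : Fin N, conj (x b i) * x b i = conj (x a i) * x a i
        + ∫ τ in a..b, (conj (v i τ) * x τ i + conj (x τ i) * v i τ) := by
      intro i
      refine my_prim_mul (f := fun τ => conj (x τ i)) (f' := fun τ => conj (v i τ))
        (g := fun τ => x τ i) (g' := v i) (my_conj_li (hx i)) (hx i) ?_ (hxprim i) hab
      intro s' t'
      show conj (x t' i) = conj (x s' i) + ∫ τ in s'..t', conj (v i τ)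
      rw [hxprim i s' t', map_add, ← my_intervalIntegral_conj]
    rw [Finset.sum_congr rfl fun i _ => hprodi i, Finset.sum_add_distrib]
    have hii : ∀ i : Fin N, IntervalIntegrable
        (fun τ => conj (v i τ) * x τ i + conj (x τ i) * v i τ) volume a b := fun i =>
      (my_mul_cont_ii (my_conj_li (hx i)) (hxc i) a b).add
        (my_cont_mul_ii (Complex.continuous_conj.comp (hxc i)) (hx i) a b)
    rw [← intervalIntegral.integral_finset_sum (fun i _ => hii i),
      intervalIntegral.integral_congr (g := fun _ => (0:ℂ)) (fun τ _ => hskew0 τ)]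
    simp
  have hnorm1 : ∀ τ : ℝ, ‖x τ‖ = 1 := by
    intro τ
    have hc : ∑ i, conj (x τ i) * x τ i = ∑ i, conj (x 0 i) * x 0 i := by
      rcases le_total (0:ℝ) τ with h | h
      · exact hcon 0 τ h
      · exact (hcon τ 0 h).symm
    have hi1 : ∀ y : EuclideanSpace ℂ (Fin N), ∑ i, conj (y i) * y i = ((‖y‖ : ℂ)) ^ 2 := by
      intro y
      have h0 := inner_self_eq_norm_sq_to_K (𝕜 := ℂ) y
      refine Eq.trans ?_ h0; rw [PiLp.inner_apply]; exact Finset.sum_congr rfl fun i _ => by rw [RCLike.inner_apply, mul_comm]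
    have h2 : ((‖x τ‖ : ℂ)) ^ 2 = ((‖x 0‖ : ℂ)) ^ 2 := by rw [← hi1, hc, hi1]
    rw [hx0] at h2
    have h3 : ‖x τ‖ ^ 2 = 1 := by
      rw [← Complex.ofReal_pow, ← Complex.ofReal_pow] at h2
      have h4 := Complex.ofReal_inj.mp h2
      simpa using h4
    nlinarith [norm_nonneg (x τ)]
  -- the inner product function and its derivative data
  set ψ : EuclideanSpace ℂ (Fin N) := (WithLp.equiv 2 (Fin N → ℂ)).symm (Bᴴ.mulVec φ) with hψ
  have hψj : ∀ j, ψ j = ∑ i, conj (B i j) * φ i := by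
    intro j
    simp [hψ, Matrix.mulVec, dotProduct, Matrix.conjTranspose_apply]
  set f : ℝ → ℂ := fun τ => ∑ i, conj (φ i) * x τ i with hfdef
  set cc : ℝ → ℂ := fun τ => ∑ j, conj (ψ j) * x τ j with hccdef
  set w : ℝ → ℂ := fun τ => ∑ i, conj (φ i) * v i τ with hwdef
  have hwli : LocallyIntegrable w volume := by
    rw [locallyIntegrable_iff]
    intro k hk
    exact integrable_finset_sum _ fun i _ => ((hx i).integrableOn_isCompact hk).const_mul _
  have hfprim : ∀ s' t' : ℝ, f t' = f s' + ∫ τ in s'..t', w τ := by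
    refine my_prim_shift (fun a b => my_li_ii hwli a b) ?_
    intro r
    calc f r = ∑ i, (conj (φ i) * x 0 i + conj (φ i) * ∫ τ in (0:ℝ)..r, v i τ) := by
          refine Finset.sum_congr rfl fun i _ => ?_
          rw [hxprim i 0 r]; ring
      _ = f 0 + ∑ i, ∫ τ in (0:ℝ)..r, conj (φ i) * v i τ := by
          rw [Finset.sum_add_distrib]; congr 1
          exact Finset.sum_congr rfl fun i _ => (intervalIntegral.integral_const_mul _ _).symm
      _ = f 0 + ∫ τ in (0:ℝ)..r, w τ := by
          rw [← intervalIntegral.integral_finset_sum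
            (fun i _ => (my_li_ii (hx i) 0 r).const_mul _)]
  have hAcol : ∀ j, ∑ i, conj (φ i) * A i j = Complex.I * lam * conj (φ j) := by
    intro j
    have h1 : conj (A.mulVec φ j) = conj ((Complex.I * lam) * φ j) := congrArg conj (hφ j)
    have h2 : ∑ k, conj (A j k) * conj (φ k) = -(Complex.I * lam) * conj (φ j) := by
      have hl : conj (A.mulVec φ j) = ∑ k, conj (A j k) * conj (φ k) := by
        simp [Matrix.mulVec, dotProduct]
      have hr : conj ((Complex.I * lam) * φ j) = -(Complex.I * lam) * conj (φ j) := by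
        rw [_root_.map_mul, _root_.map_mul, Complex.conj_I, Complex.conj_ofReal]; ring
      rw [← hl, ← hr, h1]
    calc ∑ i, conj (φ i) * A i j = -∑ i, conj (A j i) * conj (φ i) := by
          rw [← Finset.sum_neg_distrib]
          refine Finset.sum_congr rfl fun i _ => ?_
          rw [hAe j i]; ring
      _ = -(-(Complex.I * lam) * conj (φ j)) := by rw [h2]
      _ = Complex.I * lam * conj (φ j) := by ring
  have hBcol : ∀ j, ∑ i, conj (φ i) * B i j = conj (ψ j) := by
    intro j
    rw [hψj j, map_sum]
    refine Finset.sum_congr rfl fun i _ => ?_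
    rw [_root_.map_mul, Complex.conj_conj]; ring
  have hwid : ∀ τ : ℝ, w τ = Complex.I * lam * f τ + (u τ : ℂ) * cc τ := by
    intro τ
    have hvexp : ∀ i, v i τ = (∑ j, A i j * x τ j) + (u τ : ℂ) * ∑ j, B i j * x τ j := by
      intro i
      have hvv : v i τ = ∑ j, (A i j + (u τ : ℂ) * B i j) * x τ j := by
        simp [hv, Matrix.mulVec, dotProduct, Matrix.add_apply, Matrix.smul_apply]
      rw [hvv, Finset.mul_sum, ← Finset.sum_add_distrib]
      exact Finset.sum_congr rfl fun j _ => by ring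
    calc w τ = ∑ i, (∑ j, conj (φ i) * A i j * x τ j
            + (u τ : ℂ) * ∑ j, conj (φ i) * B i j * x τ j) := by
          refine Finset.sum_congr rfl fun i _ => ?_
          rw [hvexp i]
          rw [mul_add, Finset.mul_sum]
          congr 1
          · exact Finset.sum_congr rfl fun j _ => by ring
          · rw [Finset.mul_sum, Finset.mul_sum]
            rw [Finset.mul_sum]
            exact Finset.sum_congr rfl fun j _ => by ring
      _ = (∑ i, ∑ j, conj (φ i) * A i j * x τ j)
            + (u τ : ℂ) * ∑ i, ∑ j, conj (φ i) * B i j * x τ j := by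
          rw [Finset.sum_add_distrib, Finset.mul_sum]
      _ = (∑ j, (∑ i, conj (φ i) * A i j) * x τ j)
            + (u τ : ℂ) * ∑ j, (∑ i, conj (φ i) * B i j) * x τ j := by
          rw [Finset.sum_comm]
          congr 1
          · exact Finset.sum_congr rfl fun j _ => by rw [Finset.sum_mul]
          · rw [Finset.sum_comm]
            congr 1
            exact Finset.sum_congr rfl fun j _ => by rw [Finset.sum_mul]
      _ = Complex.I * lam * f τ + (u τ : ℂ) * cc τ := by
          rw [hfdef, hccdef]
          congr 1
          · rw [Finset.mul_sum]
            exact Finset.sum_congr rfl fun j _ => by rw [hAcol j]; ring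
          · congr 1
            exact Finset.sum_congr rfl fun j _ => by rw [hBcol j]
  -- rotation
  set d : ℂ := -(Complex.I * lam) with hd
  set e : ℝ → ℂ := fun τ => Complex.exp (d * τ) with he
  have hec : Continuous fun τ : ℝ => d * e τ := by
    exact continuous_const.mul (Complex.continuous_exp.comp (continuous_const.mul
      Complex.continuous_ofReal))
  have hgprod := my_prim_mul (f := e) (f' := fun τ => d * e τ) (g := f) (g' := w)
    hec.locallyIntegrable hwli (my_exp_prim d) hfprim hst
  have hrw : Set.EqOn (fun τ => d * e τ * f τ + e τ * w τ)
      (fun τ => e τ * ((u τ : ℂ) * cc τ)) (Set.uIcc s t) := by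
    intro τ _
    simp only [hwid τ, hd]
    ring
  rw [intervalIntegral.integral_congr hrw] at hgprod
  -- expressing the inner products
  have hinner : ∀ r : ℝ, ⟪φ, x r⟫_ℂ = f r := by
    intro r; simp [hfdef, PiLp.inner_apply, RCLike.inner_apply, mul_comm]
  have habs : ∀ r : ℝ, ‖e r‖ = 1 := by
    intro r
    rw [he]
    simp [Complex.norm_exp, hd]
  have h1 : ∀ r : ℝ, ‖f r‖ = ‖e r * f r‖ := by
    intro r
    rw [norm_mul, habs r, one_mul]
  rw [hinner t, hinner s, h1 t, h1 s]
  refine (abs_norm_sub_norm_le _ _).trans ?_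
  have h3 : e t * f t - e s * f s = ∫ τ in s..t, e τ * ((u τ : ℂ) * cc τ) := by
    rw [hgprod]; ring
  rw [h3]
  -- integrability of the integrand
  have hccc : Continuous cc := by
    rw [hccdef]
    exact continuous_finset_sum _ fun j _ => continuous_const.mul (hxc j)
  have hee : Continuous e := by
    exact Complex.continuous_exp.comp (continuous_const.mul Complex.continuous_ofReal)
  have hintg : IntervalIntegrable (fun τ => e τ * ((u τ : ℂ) * cc τ)) volume s t := by
    have hfe : (fun τ => e τ * ((u τ : ℂ) * cc τ))
        = fun τ => (u τ : ℂ) * (e τ * cc τ) := by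
      funext τ; ring
    rw [hfe]
    exact my_mul_cont_ii (my_ofReal_li hu) (hee.mul hccc) s t
  refine (intervalIntegral.norm_integral_le_integral_norm hst).trans ?_
  have hC : ∀ τ : ℝ, ‖e τ * ((u τ : ℂ) * cc τ)‖ ≤ ‖ψ‖ * |u τ| := by
    intro τ
    rw [norm_mul, norm_mul, habs τ, one_mul]
    have hcc : ‖cc τ‖ ≤ ‖ψ‖ := by
      have hcin : cc τ = ⟪ψ, x τ⟫_ℂ := by
        simp [hccdef, PiLp.inner_apply, RCLike.inner_apply, mul_comm]
      rw [hcin]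
      calc ‖⟪ψ, x τ⟫_ℂ‖ ≤ ‖ψ‖ * ‖x τ‖ := norm_inner_le_norm ψ (x τ)
        _ = ‖ψ‖ := by rw [hnorm1 τ, mul_one]
    have hur : ‖(u τ : ℂ)‖ = |u τ| := by
      rw [Complex.norm_real, Real.norm_eq_abs]
    rw [hur]
    calc |u τ| * ‖cc τ‖ ≤ |u τ| * ‖ψ‖ := by
          exact mul_le_mul_of_nonneg_left hcc (abs_nonneg _)
      _ = ‖ψ‖ * |u τ| := by ring
  have hbint : IntervalIntegrable (fun τ => ‖ψ‖ * |u τ|) volume s t := by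
    have := (my_li_ii' hu s t).norm
    simp only [Real.norm_eq_abs] at this
    exact this.const_mul _
  calc (∫ τ in s..t, ‖e τ * ((u τ : ℂ) * cc τ)‖)
      ≤ ∫ τ in s..t, ‖ψ‖ * |u τ| :=
        intervalIntegral.integral_mono_on hst hintg.norm hbint fun τ _ => hC τ
    _ = ‖ψ‖ * ∫ τ in s..t, |u τ| := intervalIntegral.integral_const_mul _ _
end

section
/- For the Morse potential eigenvalues λ_n = −(α − n − 1/2)², 0 ≤ n ≤ N = ⌊α − 1/2⌋ with α irrational and N ≥ 4: if j, k ∈ {0,...,N} and |λ_j − λ_k| ∈ (ℕ \ {0})·(λ_1 − λ_0), then {j, k} = {0, 1}. -/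
lemma stmt_15_aux (α : ℝ) (hα : Irrational α) (s : ℤ) (p j k : ℕ) (hp : p ≠ 0)
    (h : (s : ℝ) * (2 * α - 1 - ((j : ℝ) + k)) = p * (2 * α - 2)) : j + k = 1 := by
  have hsp : s = (p : ℤ) := by
    by_contra hne
    have hc : ((2 * s - 2 * p : ℤ) : ℝ) * α = ((s * (1 + (j : ℤ) + k) - 2 * p : ℤ) : ℝ) := by
      push_cast
      linear_combination h
    have hirr := hα.intCast_mul (show (2 * s - 2 * p : ℤ) ≠ 0 by omega)
    rw [hc] at hirr
    exact (Int.not_irrational _) hirr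
  subst hsp
  have h2 : (p : ℝ) * ((j : ℝ) + k) = (p : ℝ) * 1 := by
    push_cast at h
    linear_combination -h
  have h3 : (j : ℝ) + k = 1 := mul_left_cancel₀ (by exact_mod_cast hp) h2
  exact_mod_cast h3

/-- For the Morse eigenvalues with `α` irrational and `N = ⌊α − 1/2⌋ ≥ 4`: if
`|λ_j − λ_k|` is a nonzero natural multiple of `λ_1 − λ_0` with `j, k ≤ N`,
then `{j, k} = {0, 1}`. -/
theorem stmt_15 (α : ℝ) (hα : Irrational α) (hα2 : 1 / 2 < α)
    (N : ℕ) (hN : (N : ℝ) = ⌊α - 1 / 2⌋) (hN4 : 4 ≤ N)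
    (lam : ℕ → ℝ) (hlam : ∀ n, lam n = -(α - n - 1 / 2) ^ 2)
    (j k : ℕ) (hj : j ≤ N) (hk : k ≤ N)
    (hmult : ∃ p : ℕ, p ≠ 0 ∧ |lam j - lam k| = p * (lam 1 - lam 0)) :
    (j = 0 ∧ k = 1) ∨ (j = 1 ∧ k = 0) := by
  obtain ⟨p, hp, habs⟩ := hmult
  have hexp : lam j - lam k = ((j : ℝ) - k) * (2 * α - 1 - ((j : ℝ) + k)) := by
    rw [hlam, hlam]; ring
  have h10 : lam 1 - lam 0 = 2 * α - 2 := by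
    rw [hlam, hlam]; push_cast; ring
  have hjk : j + k = 1 := by
    rcases abs_cases (lam j - lam k) with ⟨h1, _⟩ | ⟨h1, _⟩
    · apply stmt_15_aux α hα ((j : ℤ) - k) p j k hp
      push_cast
      rw [h1, hexp, h10] at habs
      linarith [habs]
    · apply stmt_15_aux α hα ((k : ℤ) - j) p j k hp
      push_cast
      rw [h1, hexp, h10] at habs
      linarith [habs]
  omega
end
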